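/- arXiv:2103.10266 — 2 statements merged into one kernel-verified Lean document; each statement's English description precedes it below -/
import Mathlib

section
/- Let L be piecewise affine with slopes p_1 < ... < p_{L-1} on consecutive intervals [u_k, u_{k+1}] covering [-1,1], and let μ : [0,π) → ℝ be continuous. Suppose u* : [0,π) → [-1,1] satisfies, for every t in an interval I ⊂ [0,π) on which μ(t) ≠ εp_k for all k, that u*(t) is the unique minimizer of u ↦ εL(u) - μ(t)u. Then u* is constant on each connected component of I, equal to some node u_k. In particular, u* cannot jump between non-adjacent nodes without μ crossing the corresponding intermediate slope values; hence u* satisfies the staircase property: at any switch between consecutive pieces with values s_m and s_{m+1}, the open interval (min(s_m,s_{m+1}), max(s_m,s_{m+1})) contains no node u_j. -/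
open Set

/-- if `u*(t)` is the unique minimizer of `u ↦ εL(u) - μ(t)u`
whenever `μ(t)` avoids the critical values `εp_k`, then `u*` is constant,
equal to some node, on every connected set on which `μ` avoids all the `εp_k`;
moreover (staircase property) at any switch between consecutive constant
pieces with values `s₁` and `s₂`, no node lies in the open interval
`(min s₁ s₂, max s₁ s₂)`. -/
theorem stmt8 (n : ℕ) (u : Fin (n + 2) → ℝ) (hu : StrictMono u)
    (hu0 : u 0 = -1) (hulast : u (Fin.last (n + 1)) = 1)
    (p : Fin (n + 1) → ℝ) (hpmono : StrictMono p)
    (Lfun : ℝ → ℝ) (hLconv : ConvexOn ℝ (Set.Icc (-1:ℝ) 1) Lfun)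
    (hLaff : ∀ k : Fin (n + 1), ∀ x ∈ Set.Icc (u k.castSucc) (u k.succ),
      Lfun x = Lfun (u k.castSucc) + p k * (x - u k.castSucc))
    (ε : ℝ) (hε : 0 < ε)
    (μ : ℝ → ℝ) (hμ : ContinuousOn μ (Set.Icc 0 Real.pi))
    (ustar : ℝ → ℝ)
    (hargmin : ∀ t ∈ Set.Ico (0:ℝ) Real.pi, (∀ k, μ t ≠ ε * p k) →
      ustar t ∈ Set.Icc (-1:ℝ) 1 ∧
      ∀ v ∈ Set.Icc (-1:ℝ) 1, v ≠ ustar t →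
        ε * Lfun (ustar t) - μ t * ustar t < ε * Lfun v - μ t * v) :
    (∀ I : Set ℝ, I ⊆ Set.Ico 0 Real.pi → I.OrdConnected → I.Nonempty →
      (∀ t ∈ I, ∀ k, μ t ≠ ε * p k) →
      ∃ k : Fin (n + 2), ∀ t ∈ I, ustar t = u k) ∧
    ({t ∈ Set.Ico (0:ℝ) Real.pi | ∃ k, μ t = ε * p k}.Finite →
      ∀ a b c s₁ s₂ : ℝ, 0 ≤ a → a < b → b < c → c ≤ Real.pi →
        (∀ t ∈ Set.Ioo a b, ustar t = s₁) →
        (∀ t ∈ Set.Ioo b c, ustar t = s₂) →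
        ∀ j : Fin (n + 2), u j ∉ Set.Ioo (min s₁ s₂) (max s₁ s₂)) := by
  classical
  have hrange : ∀ k : Fin (n+1), u k.castSucc < u k.succ :=
    fun k => hu Fin.castSucc_lt_succ
  have hnode : ∀ m : Fin (n+2), u m ∈ Icc (-1:ℝ) 1 := by
    intro m
    constructor
    · rw [← hu0]; exact hu.monotone (Fin.zero_le m)
    · rw [← hulast]; exact hu.monotone (Fin.le_last m)
  have hstep : ∀ k : Fin (n+1),
      Lfun (u k.succ) = Lfun (u k.castSucc) + p k * (u k.succ - u k.castSucc) :=
    fun k => hLaff k _ ⟨(hrange k).le, le_refl _⟩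
  -- every point of [-1,1] lies in some segment
  have hseg : ∀ v ∈ Icc (-1:ℝ) 1, ∃ k : Fin (n+1), u k.castSucc ≤ v ∧ v ≤ u k.succ := by
    intro v hv
    by_cases hlast : u (Fin.last (n+1)) ≤ v
    · refine ⟨Fin.last n, ?_, ?_⟩
      · exact le_trans (hu.monotone (Fin.le_last _)) hlast
      · have h1 : (Fin.last n).succ = Fin.last (n+1) := rfl
        rw [h1, hulast]; exact hv.2
    · set S := Finset.univ.filter (fun i : Fin (n+2) => u i ≤ v) with hS
      have h0 : (0 : Fin (n+2)) ∈ S := by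
        simp only [hS, Finset.mem_filter, Finset.mem_univ, true_and, hu0]
        exact hv.1
      have hne : S.Nonempty := ⟨0, h0⟩
      set m := S.max' hne with hm
      have hmS : m ∈ S := S.max'_mem hne
      have hmv : u m ≤ v := by
        simpa only [hS, Finset.mem_filter, Finset.mem_univ, true_and] using hmS
      have hmlt : (m : ℕ) < n + 1 := by
        by_contra h
        have hmeq : m = Fin.last (n+1) := by
          apply Fin.ext
          have := m.isLt
          simp only [Fin.val_last]
          omega
        exact hlast (hmeq ▸ hmv)
      refine ⟨⟨(m : ℕ), hmlt⟩, ?_, ?_⟩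
      · have hcs : (⟨(m : ℕ), hmlt⟩ : Fin (n+1)).castSucc = m := by
          apply Fin.ext; simp
        rw [hcs]; exact hmv
      · by_contra h
        push_neg at h
        have hsuccS : ((⟨(m : ℕ), hmlt⟩ : Fin (n+1)).succ : Fin (n+2)) ∈ S := by
          simp only [hS, Finset.mem_filter, Finset.mem_univ, true_and]
          exact h.le
        have hle := S.le_max' _ hsuccS
        rw [← hm] at hle
        have : (m : ℕ) + 1 ≤ (m : ℕ) := by
          have := Fin.le_def.mp hle
          simpa using this
        omega
  -- the unique minimizer is a node
  have hDnode : ∀ t ∈ Ico (0:ℝ) Real.pi, (∀ k, μ t ≠ ε * p k) →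
      ∃ m : Fin (n+2), ustar t = u m := by
    intro t ht hnc
    obtain ⟨hv, hmin⟩ := hargmin t ht hnc
    obtain ⟨k, h1, h2⟩ := hseg _ hv
    rcases eq_or_lt_of_le h1 with he | h1'
    · exact ⟨k.castSucc, he.symm⟩
    rcases eq_or_lt_of_le h2 with he | h2'
    · exact ⟨k.succ, he⟩
    exfalso
    have hLv : Lfun (ustar t) = Lfun (u k.castSucc) + p k * (ustar t - u k.castSucc) :=
      hLaff k _ ⟨h1, h2⟩
    have hLs := hstep k
    rcases lt_or_gt_of_ne (hnc k) with hlt | hgt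
    · have hm := hmin (u k.castSucc) (hnode _) (ne_of_lt h1')
      rw [hLv] at hm
      have key : 0 < (ε * p k - μ t) * (ustar t - u k.castSucc) :=
        mul_pos (by linarith) (by linarith)
      nlinarith [key, hm]
    · have hm := hmin (u k.succ) (hnode _) (ne_of_gt h2')
      rw [hLv, hLs] at hm
      have key : (ε * p k - μ t) * (u k.succ - ustar t) < 0 :=
        mul_neg_of_neg_of_pos (by linarith) (by linarith)
      nlinarith [key, hm]
  -- slope bounds at a minimizing node
  have hEright : ∀ t ∈ Ico (0:ℝ) Real.pi, (∀ k, μ t ≠ ε * p k) →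
      ∀ k : Fin (n+1), ustar t = u k.castSucc → μ t < ε * p k := by
    intro t ht hnc k hk
    rcases lt_or_gt_of_ne (hnc k) with h | h
    · exact h
    exfalso
    obtain ⟨hv, hmin⟩ := hargmin t ht hnc
    have hne : u k.succ ≠ ustar t := by rw [hk]; exact (hrange k).ne'
    have hm := hmin (u k.succ) (hnode _) hne
    rw [hk, hstep k] at hm
    have key : (ε * p k - μ t) * (u k.succ - u k.castSucc) < 0 :=
      mul_neg_of_neg_of_pos (by linarith) (sub_pos.mpr (hrange k))
    nlinarith [key, hm]
  have hEleft : ∀ t ∈ Ico (0:ℝ) Real.pi, (∀ k, μ t ≠ ε * p k) →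
      ∀ k : Fin (n+1), ustar t = u k.succ → ε * p k < μ t := by
    intro t ht hnc k hk
    rcases lt_or_gt_of_ne (hnc k) with h | h
    swap
    · exact h
    exfalso
    obtain ⟨hv, hmin⟩ := hargmin t ht hnc
    have hne : u k.castSucc ≠ ustar t := by rw [hk]; exact (hrange k).ne
    have hm := hmin (u k.castSucc) (hnode _) hne
    rw [hk, hstep k] at hm
    have key : 0 < (ε * p k - μ t) * (u k.succ - u k.castSucc) :=
      mul_pos (by linarith) (sub_pos.mpr (hrange k))
    nlinarith [key, hm]
  -- two minimizing nodes over a connected noncritical set must coincide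
  have hKey : ∀ I : Set ℝ, I ⊆ Ico 0 Real.pi → I.OrdConnected →
      (∀ t ∈ I, ∀ k, μ t ≠ ε * p k) →
      ∀ t₁ ∈ I, ∀ t₂ ∈ I, ∀ m₁ m₂ : Fin (n+2),
        ustar t₁ = u m₁ → ustar t₂ = u m₂ → ¬ (m₁ < m₂) := by
    intro I hI hord hnc t₁ ht₁ t₂ ht₂ m₁ m₂ hm₁ hm₂ hlt
    have hltv : (m₁ : ℕ) < (m₂ : ℕ) := hlt
    have h1n : (m₁ : ℕ) < n + 1 := by have := m₂.isLt; omega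
    set k : Fin (n+1) := ⟨(m₁ : ℕ), h1n⟩ with hkdef
    have hc : k.castSucc = m₁ := by apply Fin.ext; simp [hkdef]
    have hA : μ t₁ < ε * p k :=
      hEright t₁ (hI ht₁) (hnc t₁ ht₁) k (by rw [hc]; exact hm₁)
    have h2pos : 1 ≤ (m₂ : ℕ) := by omega
    set k' : Fin (n+1) := ⟨(m₂ : ℕ) - 1, by have := m₂.isLt; omega⟩ with hk'def
    have hs : k'.succ = m₂ := by apply Fin.ext; simp [hk'def]; omega
    have hB : ε * p k' < μ t₂ :=
      hEleft t₂ (hI ht₂) (hnc t₂ ht₂) k' (by rw [hs]; exact hm₂)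
    have hkk' : p k ≤ p k' := hpmono.monotone (by simp [Fin.le_def, hkdef, hk'def]; omega)
    have hmid : ε * p k ∈ uIcc (μ t₁) (μ t₂) := by
      rw [Set.mem_uIcc]
      left
      constructor
      · exact hA.le
      · have : ε * p k ≤ ε * p k' := mul_le_mul_of_nonneg_left hkk' hε.le
        linarith
    have hsubI : uIcc t₁ t₂ ⊆ I := hord.uIcc_subset ht₁ ht₂
    have hcont : ContinuousOn μ (uIcc t₁ t₂) :=
      hμ.mono (subset_trans hsubI (subset_trans hI Ico_subset_Icc_self))
    obtain ⟨s, hs1, hs2⟩ := intermediate_value_uIcc hcont hmid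
    exact hnc s (hsubI hs1) k hs2
  constructor
  · -- part 1
    rintro I hI hord ⟨t₀, ht₀⟩ hnc
    obtain ⟨m, hm⟩ := hDnode t₀ (hI ht₀) (hnc t₀ ht₀)
    refine ⟨m, fun t ht => ?_⟩
    obtain ⟨m', hm'⟩ := hDnode t (hI ht) (hnc t ht)
    have h1 := hKey I hI hord hnc t ht t₀ ht₀ m' m hm' hm
    have h2 := hKey I hI hord hnc t₀ ht₀ t ht m m' hm hm'
    have hmm : m' = m := le_antisymm (not_lt.mp h2) (not_lt.mp h1)
    rw [hm', hmm]
  · -- part 2 : staircase property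
    intro hfin a b c s₁ s₂ ha hab hbc hcπ h₁ h₂ j hj
    set Fc := {t ∈ Ico (0:ℝ) Real.pi | ∃ k, μ t = ε * p k} with hFc
    have hsubab : Ioo a b ⊆ Ico 0 Real.pi := fun t ht =>
      ⟨le_trans ha ht.1.le, lt_trans ht.2 (lt_of_lt_of_le hbc hcπ)⟩
    have hsubbc : Ioo b c ⊆ Ico 0 Real.pi := fun t ht =>
      ⟨le_trans ha (le_trans hab.le ht.1.le), lt_of_lt_of_le ht.2 hcπ⟩
    have hnc' : ∀ t, t ∈ Ico (0:ℝ) Real.pi → t ∉ Fc → ∀ k, μ t ≠ ε * p k := by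
      intro t ht htF k hk
      exact htF ⟨ht, k, hk⟩
    obtain ⟨t₁, ht₁⟩ := ((Set.Ioo_infinite hab).diff hfin).nonempty
    obtain ⟨t₂, ht₂⟩ := ((Set.Ioo_infinite hbc).diff hfin).nonempty
    obtain ⟨k₁, hk₁⟩ := hDnode t₁ (hsubab ht₁.1) (hnc' t₁ (hsubab ht₁.1) ht₁.2)
    obtain ⟨k₂, hk₂⟩ := hDnode t₂ (hsubbc ht₂.1) (hnc' t₂ (hsubbc ht₂.1) ht₂.2)
    have hs₁ : s₁ = u k₁ := by rw [← h₁ t₁ ht₁.1]; exact hk₁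
    have hs₂ : s₂ = u k₂ := by rw [← h₂ t₂ ht₂.1]; exact hk₂
    -- b is in the closure of both noncritical pieces
    have hclosab : b ∈ closure (Ioo a b \ Fc) := by
      rw [Metric.mem_closure_iff]
      intro δ hδ
      have hlt : max a (b - δ) < b := max_lt hab (by linarith)
      obtain ⟨t, ht⟩ := ((Set.Ioo_infinite hlt).diff hfin).nonempty
      refine ⟨t, ⟨⟨lt_of_le_of_lt (le_max_left _ _) ht.1.1, ht.1.2⟩, ht.2⟩, ?_⟩
      have h1 : b - δ < t := lt_of_le_of_lt (le_max_right _ _) ht.1.1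
      rw [Real.dist_eq, abs_of_pos (by linarith [ht.1.2])]
      linarith [ht.1.2]
    have hclosbc : b ∈ closure (Ioo b c \ Fc) := by
      rw [Metric.mem_closure_iff]
      intro δ hδ
      have hlt : b < min c (b + δ) := lt_min hbc (by linarith)
      obtain ⟨t, ht⟩ := ((Set.Ioo_infinite hlt).diff hfin).nonempty
      refine ⟨t, ⟨⟨ht.1.1, lt_of_lt_of_le ht.1.2 (min_le_left _ _)⟩, ht.2⟩, ?_⟩
      have h1 : t < b + δ := lt_of_lt_of_le ht.1.2 (min_le_right _ _)
      rw [Real.dist_eq, abs_of_neg (by linarith [ht.1.1])]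
      linarith [ht.1.1]
    have hbIcc : b ∈ Icc (0:ℝ) Real.pi := ⟨le_trans ha hab.le, le_trans hbc.le hcπ⟩
    have hlimle : ∀ (s : Set ℝ) (r : ℝ), s ⊆ Icc (0:ℝ) Real.pi → b ∈ closure s →
        (∀ t ∈ s, μ t ≤ r) → μ b ≤ r := by
      intro s r hsub hcl hbd
      have hne : (nhdsWithin b s).NeBot := mem_closure_iff_nhdsWithin_neBot.mp hcl
      have htend : Filter.Tendsto μ (nhdsWithin b s) (nhds (μ b)) :=
        (hμ b hbIcc).mono hsub
      exact le_of_tendsto htend (Filter.eventually_of_mem self_mem_nhdsWithin hbd)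
    have hlimge : ∀ (s : Set ℝ) (r : ℝ), s ⊆ Icc (0:ℝ) Real.pi → b ∈ closure s →
        (∀ t ∈ s, r ≤ μ t) → r ≤ μ b := by
      intro s r hsub hcl hbd
      have hne : (nhdsWithin b s).NeBot := mem_closure_iff_nhdsWithin_neBot.mp hcl
      have htend : Filter.Tendsto μ (nhdsWithin b s) (nhds (μ b)) :=
        (hμ b hbIcc).mono hsub
      exact ge_of_tendsto htend (Filter.eventually_of_mem self_mem_nhdsWithin hbd)
    -- directional slope bounds
    have hLT : ∀ (m : Fin (n+2)) (kk : Fin (n+1)), (m : ℕ) ≤ (kk : ℕ) →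
        ∀ t ∈ Ico (0:ℝ) Real.pi, (∀ k, μ t ≠ ε * p k) → ustar t = u m →
          μ t ≤ ε * p kk := by
      intro m kk hmk t ht hnc hust
      have hmn : (m : ℕ) < n + 1 := lt_of_le_of_lt hmk kk.isLt
      have hcs : ((⟨(m : ℕ), hmn⟩ : Fin (n+1)).castSucc) = m := by apply Fin.ext; simp
      have h := hEright t ht hnc ⟨(m : ℕ), hmn⟩ (by rw [hcs]; exact hust)
      have hle : p ⟨(m : ℕ), hmn⟩ ≤ p kk := hpmono.monotone (by simpa [Fin.le_def] using hmk)
      have : ε * p ⟨(m : ℕ), hmn⟩ ≤ ε * p kk := mul_le_mul_of_nonneg_left hle hε.le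
      linarith
    have hGT : ∀ (m : Fin (n+2)) (kk : Fin (n+1)), (kk : ℕ) < (m : ℕ) →
        ∀ t ∈ Ico (0:ℝ) Real.pi, (∀ k, μ t ≠ ε * p k) → ustar t = u m →
          ε * p kk ≤ μ t := by
      intro m kk hkm t ht hnc hust
      have hmn : (m : ℕ) - 1 < n + 1 := by have := m.isLt; omega
      have hsucc : ((⟨(m : ℕ) - 1, hmn⟩ : Fin (n+1)).succ) = m := by
        apply Fin.ext
        simp only [Fin.val_succ]
        have := kk.isLt
        omega
      have h := hEleft t ht hnc ⟨(m : ℕ) - 1, hmn⟩ (by rw [hsucc]; exact hust)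
      have hle : p kk ≤ p ⟨(m : ℕ) - 1, hmn⟩ := hpmono.monotone (by simp [Fin.le_def]; omega)
      have : ε * p kk ≤ ε * p ⟨(m : ℕ) - 1, hmn⟩ := mul_le_mul_of_nonneg_left hle hε.le
      linarith
    have hjne : s₁ ≠ s₂ := by
      intro h
      rw [h] at hj
      simp at hj
    rcases lt_or_gt_of_ne hjne with hlt | hgt
    · -- s₁ < s₂
      rw [min_eq_left hlt.le, max_eq_right hlt.le] at hj
      have hj1 : u k₁ < u j := hs₁ ▸ hj.1
      have hj2 : u j < u k₂ := hs₂ ▸ hj.2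
      have hk₁j : (k₁ : ℕ) < (j : ℕ) := hu.lt_iff_lt.mp hj1
      have hjk₂ : (j : ℕ) < (k₂ : ℕ) := hu.lt_iff_lt.mp hj2
      have hjub : (j : ℕ) ≤ n := by have := k₂.isLt; omega
      set kL : Fin (n+1) := ⟨(j : ℕ) - 1, by omega⟩ with hkL
      set kR : Fin (n+1) := ⟨(j : ℕ), by omega⟩ with hkR
      have hpLR : p kL < p kR := hpmono (Fin.lt_def.mpr (by show (j : ℕ) - 1 < (j : ℕ); omega))
      have hμb1 : μ b ≤ ε * p kL := by
        refine hlimle _ _ (subset_trans diff_subset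
          (subset_trans hsubab Ico_subset_Icc_self)) hclosab ?_
        intro t ht
        exact hLT k₁ kL (by simp [hkL]; omega) t (hsubab ht.1)
          (hnc' t (hsubab ht.1) ht.2) (by rw [h₁ t ht.1]; exact hs₁)
      have hμb2 : ε * p kR ≤ μ b := by
        refine hlimge _ _ (subset_trans diff_subset
          (subset_trans hsubbc Ico_subset_Icc_self)) hclosbc ?_
        intro t ht
        exact hGT k₂ kR (by simp [hkR]; omega) t (hsubbc ht.1)
          (hnc' t (hsubbc ht.1) ht.2) (by rw [h₂ t ht.1]; exact hs₂)
      have : ε * p kL < ε * p kR := mul_lt_mul_of_pos_left hpLR hε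
      linarith
    · -- s₂ < s₁
      rw [min_eq_right hgt.le, max_eq_left hgt.le] at hj
      have hj1 : u k₂ < u j := hs₂ ▸ hj.1
      have hj2 : u j < u k₁ := hs₁ ▸ hj.2
      have hk₂j : (k₂ : ℕ) < (j : ℕ) := hu.lt_iff_lt.mp hj1
      have hjk₁ : (j : ℕ) < (k₁ : ℕ) := hu.lt_iff_lt.mp hj2
      have hjub : (j : ℕ) ≤ n := by have := k₁.isLt; omega
      set kL : Fin (n+1) := ⟨(j : ℕ) - 1, by omega⟩ with hkL
      set kR : Fin (n+1) := ⟨(j : ℕ), by omega⟩ with hkR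
      have hpLR : p kL < p kR := hpmono (Fin.lt_def.mpr (by show (j : ℕ) - 1 < (j : ℕ); omega))
      have hμb1 : ε * p kR ≤ μ b := by
        refine hlimge _ _ (subset_trans diff_subset
          (subset_trans hsubab Ico_subset_Icc_self)) hclosab ?_
        intro t ht
        exact hGT k₁ kR (by simp [hkR]; omega) t (hsubab ht.1)
          (hnc' t (hsubab ht.1) ht.2) (by rw [h₁ t ht.1]; exact hs₁)
      have hμb2 : μ b ≤ ε * p kL := by
        refine hlimle _ _ (subset_trans diff_subset
          (subset_trans hsubbc Ico_subset_Icc_self)) hclosbc ?_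
        intro t ht
        exact hLT k₂ kL (by simp [hkL]; omega) t (hsubbc ht.1)
          (hnc' t (hsubbc ht.1) ht.2) (by rw [h₂ t ht.1]; exact hs₂)
      have : ε * p kL < ε * p kR := mul_lt_mul_of_pos_left hpLR hε
      linarith
end

section
/- Fix a finite set of frequencies E_a, E_b of positive integers and bounds: any measurable control u : [0,π) → [-1,1] which, outside a finite set, satisfies u(t) ∈ argmin_{|v|≤1}(εL(v) - μ(t)v) for the piecewise affine L with slopes (p_k)_{k=1}^{L-1} and μ(t) = Σ_{j∈E_a} a_j cos(jt) + Σ_{j∈E_b} b_j sin(jt) not identically zero, has at most M* switching points in [0,π), where M* depends only on max(E_a ∪ E_b) and L (the cardinality of the node set), and not on the coefficients a_j, b_j. Consequently ‖u‖_BV ≤ π + 2·M* uniformly over all such controls. -/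
open Set MeasureTheory

open Polynomial
open scoped ENNReal NNReal

noncomputable section

lemma exp_pow_add_cos (t : ℝ) (d j : ℕ) (hj : j ≤ d) :
    Complex.exp (t * Complex.I) ^ (d + j) + Complex.exp (t * Complex.I) ^ (d - j)
      = Complex.exp (d * t * Complex.I) * (2 * Real.cos (j * t)) := by
  have key : ∀ m : ℕ, Complex.exp (t * Complex.I) ^ m = Complex.exp ((m : ℂ) * t * Complex.I) := by
    intro m
    rw [← Complex.exp_nat_mul]; ring_nf
  rw [key, key]
  have h1 : ((d + j : ℕ) : ℂ) * t * Complex.I = (d : ℂ) * t * Complex.I + (j : ℂ) * t * Complex.I := by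
    push_cast; ring
  have h2 : ((d - j : ℕ) : ℂ) * t * Complex.I = (d : ℂ) * t * Complex.I + (-((j : ℂ) * t) * Complex.I) := by
    push_cast [Nat.cast_sub hj]; ring
  rw [h1, h2, Complex.exp_add, Complex.exp_add]
  have c1 : Complex.exp ((j : ℂ) * t * Complex.I) = Complex.cos ((j:ℂ)*t) + Complex.sin ((j:ℂ)*t) * Complex.I := by
    rw [← Complex.exp_mul_I]
  have c2 : Complex.exp ((-((j : ℂ) * t)) * Complex.I) = Complex.cos ((j:ℂ)*t) - Complex.sin ((j:ℂ)*t) * Complex.I := by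
    rw [Complex.exp_mul_I, Complex.cos_neg, Complex.sin_neg]; ring
  rw [c1, c2]
  have : (Real.cos (j * t) : ℂ) = Complex.cos ((j:ℂ)*t) := by
    rw [Complex.ofReal_cos]; norm_cast
  rw [this]; ring

lemma exp_pow_sub_sin (t : ℝ) (d j : ℕ) (hj : j ≤ d) :
    Complex.exp (t * Complex.I) ^ (d + j) - Complex.exp (t * Complex.I) ^ (d - j)
      = Complex.exp (d * t * Complex.I) * (2 * Complex.I * Real.sin (j * t)) := by
  have key : ∀ m : ℕ, Complex.exp (t * Complex.I) ^ m = Complex.exp ((m : ℂ) * t * Complex.I) := by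
    intro m
    rw [← Complex.exp_nat_mul]; ring_nf
  rw [key, key]
  have h1 : ((d + j : ℕ) : ℂ) * t * Complex.I = (d : ℂ) * t * Complex.I + (j : ℂ) * t * Complex.I := by
    push_cast; ring
  have h2 : ((d - j : ℕ) : ℂ) * t * Complex.I = (d : ℂ) * t * Complex.I + (-((j : ℂ) * t) * Complex.I) := by
    push_cast [Nat.cast_sub hj]; ring
  rw [h1, h2, Complex.exp_add, Complex.exp_add]
  have c1 : Complex.exp ((j : ℂ) * t * Complex.I) = Complex.cos ((j:ℂ)*t) + Complex.sin ((j:ℂ)*t) * Complex.I := by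
    rw [← Complex.exp_mul_I]
  have c2 : Complex.exp ((-((j : ℂ) * t)) * Complex.I) = Complex.cos ((j:ℂ)*t) - Complex.sin ((j:ℂ)*t) * Complex.I := by
    rw [Complex.exp_mul_I, Complex.cos_neg, Complex.sin_neg]; ring
  rw [c1, c2]
  have : (Real.sin (j * t) : ℂ) = Complex.sin ((j:ℂ)*t) := by
    rw [Complex.ofReal_sin]; norm_cast
  rw [this]; ring

def trigP (Ea Eb : Finset ℕ) (aC bC : ℕ → ℝ) (c : ℝ) (d : ℕ) : Polynomial ℂ :=
  (∑ j ∈ Ea, Polynomial.C ((aC j : ℂ)/2) * (X^(d+j) + X^(d-j)))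
  + (∑ j ∈ Eb, Polynomial.C ((bC j : ℂ) * (-Complex.I/2)) * (X^(d+j) - X^(d-j)))
  - Polynomial.C (c:ℂ) * X^d

lemma trigP_eval (Ea Eb : Finset ℕ) (aC bC : ℕ → ℝ) (c : ℝ) (d : ℕ)
    (hda : ∀ j ∈ Ea, j ≤ d) (hdb : ∀ j ∈ Eb, j ≤ d) (t : ℝ) :
    (trigP Ea Eb aC bC c d).eval (Complex.exp (t * Complex.I)) =
      Complex.exp ((d:ℂ) * t * Complex.I) *
        (((∑ j ∈ Ea, aC j * Real.cos (j*t)) + (∑ j ∈ Eb, bC j * Real.sin (j*t)) - c : ℝ)) := by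
  have key : Complex.exp (t*Complex.I) ^ d = Complex.exp ((d:ℂ) * t * Complex.I) := by
    rw [← Complex.exp_nat_mul]; ring_nf
  simp only [trigP, eval_sub, eval_add, eval_mul, eval_pow, eval_X, eval_C, eval_finset_sum]
  rw [Finset.sum_congr rfl (fun j hj => by rw [exp_pow_add_cos t d j (hda j hj)] :
        ∀ j ∈ Ea, ((aC j : ℂ)/2) * (Complex.exp (t*Complex.I)^(d+j) + Complex.exp (t*Complex.I)^(d-j))
          = ((aC j : ℂ)/2) * (Complex.exp ((d:ℂ)*t*Complex.I) * (2 * Real.cos (j*t)))),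
      Finset.sum_congr rfl (fun j hj => by rw [exp_pow_sub_sin t d j (hdb j hj)] :
        ∀ j ∈ Eb, ((bC j : ℂ) * (-Complex.I/2)) * (Complex.exp (t*Complex.I)^(d+j) - Complex.exp (t*Complex.I)^(d-j))
          = ((bC j : ℂ) * (-Complex.I/2)) * (Complex.exp ((d:ℂ)*t*Complex.I) * (2*Complex.I*Real.sin (j*t)))),
      key]
  push_cast
  rw [mul_sub, mul_add, Finset.mul_sum, Finset.mul_sum]
  congr 1
  · congr 1
    · exact Finset.sum_congr rfl (fun j hj => by push_cast; ring)
    · refine Finset.sum_congr rfl (fun j hj => ?_)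
      push_cast
      linear_combination (-(bC j : ℂ) * Complex.exp ((d:ℂ)*t*Complex.I) * Complex.sin ((j:ℂ)*t)) * Complex.I_sq
  · ring

lemma trigP_coeff (Ea Eb : Finset ℕ) (aC bC : ℕ → ℝ) (c : ℝ) (d : ℕ) (j0 : ℕ) (hj0 : 0 < j0) :
    (trigP Ea Eb aC bC c d).coeff (d + j0) =
      (if j0 ∈ Ea then (aC j0 : ℂ)/2 else 0)
        + (if j0 ∈ Eb then (bC j0 : ℂ) * (-Complex.I/2) else 0) := by
  have hd : ¬ (d + j0 = d) := by omega
  have h2 : ∀ j : ℕ, ¬ (d + j0 = d - j) := fun j => by omega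
  have h3 : ∀ j : ℕ, (d + j0 = d + j) ↔ j0 = j := fun j => by omega
  simp only [trigP, coeff_sub, coeff_add, finset_sum_coeff, coeff_C_mul, coeff_X_pow,
    h2, hd, if_false, add_zero, sub_zero, h3, mul_zero, mul_one]
  rw [Finset.sum_congr rfl (fun j _ => by rw [mul_ite, mul_one, mul_zero] :
        ∀ j ∈ Ea, ((aC j : ℂ)/2) * (if j0 = j then 1 else 0) = if j0 = j then (aC j : ℂ)/2 else 0),
      Finset.sum_congr rfl (fun j _ => by rw [mul_ite, mul_one, mul_zero] :
        ∀ j ∈ Eb, ((bC j : ℂ) * (-Complex.I/2)) * (if j0 = j then 1 else 0)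
          = if j0 = j then (bC j : ℂ) * (-Complex.I/2) else 0),
      Finset.sum_ite_eq Ea j0 (fun j => (aC j : ℂ)/2),
      Finset.sum_ite_eq Eb j0 (fun j => (bC j : ℂ) * (-Complex.I/2))]

lemma trigP_ne_zero (Ea Eb : Finset ℕ) (hEa : ∀ j ∈ Ea, 0 < j) (hEb : ∀ j ∈ Eb, 0 < j)
    (aC bC : ℕ → ℝ)
    (hne : (∃ j ∈ Ea, aC j ≠ 0) ∨ (∃ j ∈ Eb, bC j ≠ 0)) (c : ℝ) (d : ℕ) :
    trigP Ea Eb aC bC c d ≠ 0 := by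
  rcases hne with ⟨j0, hj0, ha⟩ | ⟨j0, hj0, hb⟩
  · intro h
    have h1 := trigP_coeff Ea Eb aC bC c d j0 (hEa j0 hj0)
    rw [h, coeff_zero] at h1
    have hre := congrArg Complex.re h1.symm
    by_cases hc : j0 ∈ Eb <;>
      simp [hj0, hc, Complex.div_re] at hre <;> exact ha hre
  · intro h
    have h1 := trigP_coeff Ea Eb aC bC c d j0 (hEb j0 hj0)
    rw [h, coeff_zero] at h1
    have him := congrArg Complex.im h1.symm
    by_cases hc : j0 ∈ Ea <;>
      simp [hj0, hc, Complex.div_im] at him <;> exact hb him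

lemma trigP_natDegree_le (d' : ℕ) (Ea Eb : Finset ℕ) (hEa : ∀ j ∈ Ea, j ≤ d') (hEb : ∀ j ∈ Eb, j ≤ d')
    (aC bC : ℕ → ℝ) (c : ℝ) :
    (trigP Ea Eb aC bC c d').natDegree ≤ 2 * d' := by
  have hpow : ∀ m : ℕ, m ≤ 2*d' → ((X : ℂ[X]) ^ m).natDegree ≤ 2*d' := fun m hm => by
    simpa [natDegree_X_pow] using hm
  unfold trigP
  refine le_trans (natDegree_sub_le _ _) (max_le (le_trans (natDegree_add_le _ _) (max_le ?_ ?_)) ?_)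
  · refine natDegree_sum_le_of_forall_le _ _ (fun j hj => ?_)
    refine le_trans (natDegree_C_mul_le _ _) (le_trans (natDegree_add_le _ _) (max_le ?_ ?_)) <;>
      [exact hpow _ (by have := hEa j hj; omega); exact hpow _ (by omega)]
  · refine natDegree_sum_le_of_forall_le _ _ (fun j hj => ?_)
    refine le_trans (natDegree_C_mul_le _ _) (le_trans (natDegree_sub_le _ _) (max_le ?_ ?_)) <;>
      [exact hpow _ (by have := hEb j hj; omega); exact hpow _ (by omega)]
  · exact le_trans (natDegree_C_mul_le _ _) (hpow _ (by omega))

lemma level_set_card (Ea Eb : Finset ℕ) (hEa : ∀ j ∈ Ea, 0 < j) (hEb : ∀ j ∈ Eb, 0 < j)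
    (aC bC : ℕ → ℝ)
    (hne : (∃ j ∈ Ea, aC j ≠ 0) ∨ (∃ j ∈ Eb, bC j ≠ 0)) (c : ℝ) :
    {t : ℝ | t ∈ Set.Ico 0 Real.pi ∧
        (∑ j ∈ Ea, aC j * Real.cos (j * t)) + (∑ j ∈ Eb, bC j * Real.sin (j * t)) = c}.Finite ∧
    {t : ℝ | t ∈ Set.Ico 0 Real.pi ∧
        (∑ j ∈ Ea, aC j * Real.cos (j * t)) + (∑ j ∈ Eb, bC j * Real.sin (j * t)) = c}.ncard
      ≤ 2 * ((Ea ∪ Eb).sup id) := by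
  set d := (Ea ∪ Eb).sup id with hd
  set Zc := {t : ℝ | t ∈ Set.Ico 0 Real.pi ∧
        (∑ j ∈ Ea, aC j * Real.cos (j * t)) + (∑ j ∈ Eb, bC j * Real.sin (j * t)) = c} with hZc
  set P := trigP Ea Eb aC bC c d with hP
  have hPne : P ≠ 0 := trigP_ne_zero Ea Eb hEa hEb aC bC hne c d
  have hdeg : P.natDegree ≤ 2 * d :=
    trigP_natDegree_le d Ea Eb (fun j hj => Finset.le_sup (f := id) (Finset.mem_union_left _ hj))
      (fun j hj => Finset.le_sup (f := id) (Finset.mem_union_right _ hj)) aC bC c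
  set f : ℝ → ℂ := fun t => Complex.exp (t * Complex.I) with hf
  have hinj : Set.InjOn f (Set.Ico 0 Real.pi) := by
    intro s hs t ht h
    have h1 : Real.cos s = Real.cos t := by
      have := congrArg Complex.re h
      simpa [hf, Complex.exp_ofReal_mul_I_re] using this
    exact Real.injOn_cos ⟨hs.1, hs.2.le⟩ ⟨ht.1, ht.2.le⟩ h1
  have himg : f '' Zc ⊆ ↑P.roots.toFinset := by
    rintro z ⟨t, ht, rfl⟩
    have heval := trigP_eval Ea Eb aC bC c d
      (fun j hj => Finset.le_sup (f := id) (Finset.mem_union_left _ hj))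
      (fun j hj => Finset.le_sup (f := id) (Finset.mem_union_right _ hj)) t
    have : P.eval (f t) = 0 := by
      rw [hf, heval, ht.2]
      simp
    simp only [Multiset.mem_toFinset, Finset.coe_sort_coe, Multiset.mem_coe,
      Finset.mem_coe]
    rw [Polynomial.mem_roots hPne]
    exact this
  have hfin' : (f '' Zc).Finite := (Set.finite_coe_iff.mp inferInstance : (↑P.roots.toFinset : Set ℂ).Finite).subset himg
  have hZfin : Zc.Finite := Set.Finite.of_finite_image hfin' (hinj.mono (fun t ht => ht.1))
  refine ⟨hZfin, ?_⟩
  have h1 : Zc.ncard = (f '' Zc).ncard := (Set.ncard_image_of_injOn (hinj.mono (fun t ht => ht.1))).symm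
  rw [h1]
  calc (f '' Zc).ncard ≤ (↑P.roots.toFinset : Set ℂ).ncard :=
        Set.ncard_le_ncard himg (Set.finite_coe_iff.mp inferInstance)
    _ = P.roots.toFinset.card := Set.ncard_coe_finset _
    _ ≤ Multiset.card P.roots := Multiset.toFinset_card_le _
    _ ≤ P.natDegree := Polynomial.card_roots' P
    _ ≤ 2 * d := hdeg

section Argmin
variable {n : ℕ} {nodes : Fin (n + 2) → ℝ} {p : Fin (n + 1) → ℝ} {ε : ℝ}

lemma nodes_mem_Icc (hnodes : StrictMono nodes) (hn0 : nodes 0 = -1)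
    (hnlast : nodes (Fin.last (n + 1)) = 1) (m : Fin (n + 2)) :
    nodes m ∈ Set.Icc (-1:ℝ) 1 := by
  constructor
  · rw [← hn0]; exact hnodes.monotone (Fin.zero_le m)
  · rw [← hnlast]; exact hnodes.monotone (Fin.le_last m)

lemma exists_seg (hnodes : StrictMono nodes) (hn0 : nodes 0 = -1)
    (hnlast : nodes (Fin.last (n + 1)) = 1) (x : ℝ) (hx : x ∈ Set.Icc (-1:ℝ) 1) :
    ∃ i : Fin (n+1), x ∈ Set.Icc (nodes i.castSucc) (nodes i.succ) := by
  classical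
  by_cases hone : x = 1
  · refine ⟨Fin.last n, ?_, ?_⟩
    · rw [hone]
      exact (nodes_mem_Icc hnodes hn0 hnlast _).2
    · rw [hone, ← hnlast]
      have : (Fin.last n).succ = Fin.last (n+1) := rfl
      rw [this]
  · set F := Finset.univ.filter (fun i : Fin (n+2) => nodes i ≤ x) with hF
    have h0 : (0 : Fin (n+2)) ∈ F := by
      simp only [hF, Finset.mem_filter, Finset.mem_univ, true_and, hn0]
      exact hx.1
    set m := F.max' ⟨0, h0⟩ with hm
    have hmx : nodes m ≤ x := (Finset.mem_filter.mp (F.max'_mem ⟨0, h0⟩)).2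
    have hmne : (m : ℕ) ≠ n + 1 := by
      intro h
      have : m = Fin.last (n+1) := Fin.ext h
      rw [this, hnlast] at hmx
      exact hone (le_antisymm hx.2 hmx)
    have hmlt : (m : ℕ) < n + 1 := lt_of_le_of_ne (Nat.lt_succ_iff.mp m.isLt) hmne
    refine ⟨⟨(m : ℕ), hmlt⟩, ?_, ?_⟩
    · have : (⟨(m : ℕ), hmlt⟩ : Fin (n+1)).castSucc = m := Fin.ext rfl
      rw [this]; exact hmx
    · by_contra hcon
      push_neg at hcon
      have hmem : (⟨(m : ℕ), hmlt⟩ : Fin (n+1)).succ ∈ F := by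
        simp only [hF, Finset.mem_filter, Finset.mem_univ, true_and]
        exact hcon.le
      have := F.le_max' _ hmem
      rw [← hm] at this
      have h2 : (m : ℕ) + 1 ≤ (m : ℕ) := this
      omega

/-- index of the argmin node for level `y` -/
def selIdx (p : Fin (n + 1) → ℝ) (ε y : ℝ) : ℕ :=
  (Finset.univ.filter (fun k : Fin (n+1) => ε * p k < y)).card

lemma selIdx_le (y : ℝ) : selIdx p ε y ≤ n + 1 := by
  classical
  exact le_trans (Finset.card_filter_le _ _) (by simp)

lemma selIdx_lt_iff (hpmono : StrictMono p) (hε : 0 < ε) (y : ℝ) (hy : ∀ k, y ≠ ε * p k) (k : Fin (n+1)) :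
    (k : ℕ) < selIdx p ε y ↔ ε * p k < y := by
  classical
  constructor
  · intro h
    by_contra hcon
    push_neg at hcon
    have hlt : y < ε * p k := lt_of_le_of_ne hcon (hy k)
    have hsub : (Finset.univ.filter (fun k' : Fin (n+1) => ε * p k' < y)) ⊆ Finset.Iio k := by
      intro k' hk'
      have hk'' : ε * p k' < y := (Finset.mem_filter.mp hk').2
      have : ε * p k' < ε * p k := lt_trans hk'' hlt
      have : p k' < p k := by
        have := (mul_lt_mul_iff_right₀ hε).mp this
        exact this
      exact Finset.mem_Iio.mpr (hpmono.lt_iff_lt.mp this)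
    have := Finset.card_le_card hsub
    rw [Fin.card_Iio] at this
    exact absurd (lt_of_lt_of_le h this) (lt_irrefl _)
  · intro h
    have hsub : Finset.Iic k ⊆ (Finset.univ.filter (fun k' : Fin (n+1) => ε * p k' < y)) := by
      intro k' hk'
      have hk'' : k' ≤ k := Finset.mem_Iic.mp hk'
      refine Finset.mem_filter.mpr ⟨Finset.mem_univ _, ?_⟩
      have : p k' ≤ p k := hpmono.monotone hk''
      calc ε * p k' ≤ ε * p k := by nlinarith
        _ < y := h
    have := Finset.card_le_card hsub
    rw [Fin.card_Iic] at this
    unfold selIdx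
    omega

lemma lt_of_selIdx_le (hpmono : StrictMono p) (hε : 0 < ε) (y : ℝ) (hy : ∀ k, y ≠ ε * p k) (k : Fin (n+1))
    (h : selIdx p ε y ≤ (k : ℕ)) : y < ε * p k := by
  have := (selIdx_lt_iff hpmono hε y hy k).not.mp (by omega)
  push_neg at this
  exact lt_of_le_of_ne this (hy k)

end Argmin

section Argmin2
variable {n : ℕ} {nodes : Fin (n + 2) → ℝ} {p : Fin (n + 1) → ℝ} {ε : ℝ}

lemma argmin_eq (hnodes : StrictMono nodes) (hn0 : nodes 0 = -1)
    (hnlast : nodes (Fin.last (n + 1)) = 1) (hpmono : StrictMono p)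
    (Lfun : ℝ → ℝ)
    (hLaff : ∀ k : Fin (n + 1), ∀ x ∈ Set.Icc (nodes k.castSucc) (nodes k.succ),
      Lfun x = Lfun (nodes k.castSucc) + p k * (x - nodes k.castSucc))
    (hε : 0 < ε) (y : ℝ) (hy : ∀ k, y ≠ ε * p k)
    (x : ℝ) (hx : x ∈ Set.Icc (-1:ℝ) 1)
    (hmin : ∀ v ∈ Set.Icc (-1:ℝ) 1, ε * Lfun x - y * x ≤ ε * Lfun v - y * v) :
    x = nodes ⟨selIdx p ε y, Nat.lt_succ_of_le (selIdx_le y)⟩ := by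
  classical
  set k0 : ℕ := selIdx p ε y with hk0def
  set K0 : Fin (n+2) := ⟨k0, Nat.lt_succ_of_le (selIdx_le y)⟩ with hK0
  set g : Fin (n+2) → ℝ := fun m => ε * Lfun (nodes m) - y * nodes m with hg
  have hstep : ∀ i : Fin (n+1),
      g i.succ = g i.castSucc + (ε * p i - y) * (nodes i.succ - nodes i.castSucc) := by
    intro i
    have hmem : nodes i.succ ∈ Set.Icc (nodes i.castSucc) (nodes i.succ) :=
      ⟨le_of_lt (hnodes i.castSucc_lt_succ), le_refl _⟩
    have := hLaff i (nodes i.succ) hmem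
    simp only [hg]
    rw [this]; ring
  have hΔ : ∀ i : Fin (n+1), 0 < nodes i.succ - nodes i.castSucc := by
    intro i; have := hnodes i.castSucc_lt_succ; linarith
  have chain_down : ∀ δ : ℕ, ∀ m : Fin (n+2), (m:ℕ) + δ = k0 → g K0 ≤ g m := by
    intro δ
    induction δ with
    | zero =>
      intro m hm
      have : m = K0 := Fin.ext (by simpa using hm)
      rw [this]
    | succ δ ih =>
      intro m hm
      have hmn : (m:ℕ) < k0 := by omega
      set i : Fin (n+1) := ⟨(m:ℕ), by have := selIdx_le (p := p) (ε := ε) y; omega⟩ with hi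
      have hmc : i.castSucc = m := Fin.ext rfl
      have hslope : ε * p i < y := (selIdx_lt_iff hpmono hε y hy i).mp (by simpa [hi] using hmn)
      have h1 : g i.succ < g i.castSucc := by nlinarith [hstep i, hΔ i]
      have h2 := ih i.succ (by simp only [Fin.val_succ, hi]; omega)
      rw [← hmc]
      linarith
  have chain_up : ∀ δ : ℕ, ∀ m : Fin (n+2), (m:ℕ) = k0 + δ → g K0 ≤ g m := by
    intro δ
    induction δ with
    | zero =>
      intro m hm
      have : m = K0 := Fin.ext (by simpa using hm)
      rw [this]
    | succ δ ih =>
      intro m hm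
      set i : Fin (n+1) := ⟨(m:ℕ) - 1, by have := m.isLt; omega⟩ with hi
      have hmc : i.succ = m := Fin.ext (by simp [hi]; omega)
      have hslope : y < ε * p i := lt_of_selIdx_le hpmono hε y hy i (by simp [hi]; omega)
      have h1 : g i.castSucc < g i.succ := by nlinarith [hstep i, hΔ i]
      have h2 := ih i.castSucc (by simp only [Fin.coe_castSucc, hi]; omega)
      rw [← hmc]
      linarith
  have hchain : ∀ m : Fin (n+2), g K0 ≤ g m := by
    intro m
    rcases le_or_gt (m:ℕ) k0 with h | h
    · exact chain_down (k0 - (m:ℕ)) m (by omega)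
    · exact chain_up ((m:ℕ) - k0) m (by omega)
  have hchain_strict_down : ∀ m : Fin (n+2), (m:ℕ) < k0 → g K0 < g m := by
    intro m hm
    set i : Fin (n+1) := ⟨(m:ℕ), by have := selIdx_le (p := p) (ε := ε) y; omega⟩ with hi
    have hmc : i.castSucc = m := Fin.ext rfl
    have hslope : ε * p i < y := (selIdx_lt_iff hpmono hε y hy i).mp (by simpa [hi] using hm)
    have h1 : g i.succ < g i.castSucc := by nlinarith [hstep i, hΔ i]
    have h2 : g K0 ≤ g i.succ := hchain i.succ
    rw [← hmc]; linarith
  have hchain_strict_up : ∀ m : Fin (n+2), k0 < (m:ℕ) → g K0 < g m := by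
    intro m hm
    set i : Fin (n+1) := ⟨(m:ℕ) - 1, by have := m.isLt; omega⟩ with hi
    have hmc : i.succ = m := Fin.ext (by simp [hi]; omega)
    have hslope : y < ε * p i := lt_of_selIdx_le hpmono hε y hy i (by simp [hi]; omega)
    have h1 : g i.castSucc < g i.succ := by nlinarith [hstep i, hΔ i]
    have h2 : g K0 ≤ g i.castSucc := hchain i.castSucc
    rw [← hmc]; linarith
  -- x lies in some segment
  obtain ⟨i, hseg⟩ := exists_seg hnodes hn0 hnlast x hx
  have haff := hLaff i x hseg
  have hFx : ε * Lfun x - y * x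
      = g i.castSucc + (ε * p i - y) * (x - nodes i.castSucc) := by
    simp only [hg]; rw [haff]; ring
  have hminK0 : ε * Lfun x - y * x ≤ g K0 :=
    hmin (nodes K0) (nodes_mem_Icc hnodes hn0 hnlast K0)
  rcases lt_or_ge (i:ℕ) k0 with hc | hc
  · -- slope negative
    have hslope : ε * p i < y := (selIdx_lt_iff hpmono hε y hy i).mp hc
    have hge : g i.succ ≤ ε * Lfun x - y * x := by
      rw [hFx, hstep i]
      nlinarith [hseg.2]
    rcases eq_or_lt_of_le (show (i:ℕ) + 1 ≤ k0 from hc) with he | he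
    · have hKeq : i.succ = K0 := Fin.ext (by simpa using he)
      have h1 : ε * Lfun x - y * x = g K0 + (ε * p i - y) * (x - nodes K0) := by
        rw [hFx, ← hKeq, hstep i]; ring
      have h0 : 0 ≤ (ε * p i - y) * (x - nodes K0) := by
        rw [← hKeq]; nlinarith [hseg.2]
      have h2 : (ε * p i - y) * (x - nodes K0) = 0 := by linarith
      have h3 : ε * p i - y ≠ 0 := by linarith
      rcases mul_eq_zero.mp h2 with h | h
      · exact absurd h h3
      · linarith
    · exact absurd (lt_of_lt_of_le (hchain_strict_down i.succ (by simpa using he))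
        (le_trans hge hminK0)) (lt_irrefl _)
  · -- slope positive
    have hslope : y < ε * p i := lt_of_selIdx_le hpmono hε y hy i hc
    have hge : g i.castSucc ≤ ε * Lfun x - y * x := by
      rw [hFx]
      nlinarith [hseg.1]
    rcases eq_or_lt_of_le hc with he | he
    · have hKeq : i.castSucc = K0 := Fin.ext (by simpa using he.symm)
      have h1 : ε * Lfun x - y * x = g K0 + (ε * p i - y) * (x - nodes K0) := by
        rw [hFx, ← hKeq]
      have h0 : 0 ≤ (ε * p i - y) * (x - nodes K0) := by
        rw [← hKeq]; nlinarith [hseg.1]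
      have h2 : (ε * p i - y) * (x - nodes K0) = 0 := by linarith
      have h3 : ε * p i - y ≠ 0 := by linarith
      rcases mul_eq_zero.mp h2 with h | h
      · exact absurd h h3
      · linarith
    · exact absurd (lt_of_lt_of_le (hchain_strict_up i.castSucc (by simpa using he))
        (le_trans hge hminK0)) (lt_irrefl _)

end Argmin2

lemma selIdx_const {n : ℕ} {p : Fin (n + 1) → ℝ} {ε : ℝ}
    (μ : ℝ → ℝ) (hcont : Continuous μ) (r1 r2 : ℝ)
    (hnocross : ∀ r ∈ Set.uIcc r1 r2, ∀ k : Fin (n+1), μ r ≠ ε * p k) :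
    selIdx p ε (μ r1) = selIdx p ε (μ r2) := by
  classical
  unfold selIdx
  congr 1
  apply Finset.filter_congr
  intro k _
  have hiv := intermediate_value_uIcc (f := μ) (a := r1) (b := r2) hcont.continuousOn
  have h1 := hnocross r1 Set.left_mem_uIcc k
  have h2 := hnocross r2 Set.right_mem_uIcc k
  constructor
  · intro h
    by_contra hcon
    push_neg at hcon
    have hlt : μ r2 < ε * p k := lt_of_le_of_ne hcon h2
    have hmem : ε * p k ∈ Set.uIcc (μ r1) (μ r2) := by
      rw [Set.mem_uIcc]; right; constructor <;> linarith
    obtain ⟨r, hr, hr'⟩ := hiv hmem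
    exact hnocross r hr k hr'
  · intro h
    by_contra hcon
    push_neg at hcon
    have hlt : μ r1 < ε * p k := lt_of_le_of_ne hcon h1
    have hmem : ε * p k ∈ Set.uIcc (μ r1) (μ r2) := by
      rw [Set.mem_uIcc]; left; constructor <;> linarith
    obtain ⟨r, hr, hr'⟩ := hiv hmem
    exact hnocross r hr k hr'

open MeasureTheory


/-- uniform bound on the number of switching points. There is
`M*` (independent of the coefficients of the trigonometric polynomial `μ`)
such that any measurable control `u` with values in `[-1,1]` satisfying the
pointwise argmin condition for `εL(v) - μ(t)v` outside a finite set agrees,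
a.e. on `[0,π)`, with a step function having at most `M*` switches; in
particular `‖u‖_BV ≤ π + 2·M*`. -/
theorem stmt14 (Ea Eb : Finset ℕ) (hEa : ∀ j ∈ Ea, 0 < j) (hEb : ∀ j ∈ Eb, 0 < j)
    (n : ℕ) (nodes : Fin (n + 2) → ℝ) (hnodes : StrictMono nodes)
    (hn0 : nodes 0 = -1) (hnlast : nodes (Fin.last (n + 1)) = 1)
    (p : Fin (n + 1) → ℝ) (hpmono : StrictMono p)
    (Lfun : ℝ → ℝ) (hLconv : ConvexOn ℝ (Set.Icc (-1:ℝ) 1) Lfun)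
    (hLaff : ∀ k : Fin (n + 1),
      ∀ x ∈ Set.Icc (nodes k.castSucc) (nodes k.succ),
      Lfun x = Lfun (nodes k.castSucc) + p k * (x - nodes k.castSucc))
    (ε : ℝ) (hε : 0 < ε) :
    ∃ Mstar : ℕ,
      ∀ (aC bC : ℕ → ℝ),
        ((∃ j ∈ Ea, aC j ≠ 0) ∨ (∃ j ∈ Eb, bC j ≠ 0)) →
        ∀ μ : ℝ → ℝ,
          (∀ t, μ t = (∑ j ∈ Ea, aC j * Real.cos (j * t)) +
            (∑ j ∈ Eb, bC j * Real.sin (j * t))) →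
        ∀ u : ℝ → ℝ, Measurable u → (∀ t, u t ∈ Set.Icc (-1:ℝ) 1) →
          (∃ S : Set ℝ, S.Finite ∧ ∀ t ∈ Set.Ico (0:ℝ) Real.pi \ S,
            ∀ v ∈ Set.Icc (-1:ℝ) 1,
              ε * Lfun (u t) - μ t * u t ≤ ε * Lfun v - μ t * v) →
          ∃ v : ℝ → ℝ,
            (∀ᵐ t ∂(volume.restrict (Set.Ico 0 Real.pi)), u t = v t) ∧
            (∃ (M : ℕ) (φ : ℕ → ℝ) (sv : ℕ → Fin (n + 2)),
              M ≤ Mstar ∧ φ 0 = 0 ∧ φ (M + 1) = Real.pi ∧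
              (∀ m ≤ M, φ m < φ (m + 1)) ∧
              (∀ m ≤ M, ∀ t ∈ Set.Ico (φ m) (φ (m + 1)),
                v t = nodes (sv m))) ∧
            (∫ t in Set.Ico (0:ℝ) Real.pi, |v t|) ≤ Real.pi ∧
            eVariationOn v (Set.Ico 0 Real.pi) ≤ 2 * Mstar := by

  classical
  set d := (Ea ∪ Eb).sup id with hd
  refine ⟨(n+1) * (2*d), ?_⟩
  intro aC bC hne μ hμ u hu hur hargS
  obtain ⟨S, hSfin, hSmin⟩ := hargS
  have hμeq : μ = fun t => (∑ j ∈ Ea, aC j * Real.cos (j*t)) + (∑ j ∈ Eb, bC j * Real.sin (j*t)) :=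
    funext hμ
  have hcont : Continuous μ := by
    rw [hμeq]; fun_prop
  -- crossing set
  have hZk : ∀ k : Fin (n+1), ({t : ℝ | t ∈ Set.Ico 0 Real.pi ∧ μ t = ε * p k}).Finite ∧
      ({t : ℝ | t ∈ Set.Ico 0 Real.pi ∧ μ t = ε * p k}).ncard ≤ 2*d := by
    intro k
    have h := level_set_card Ea Eb hEa hEb aC bC hne (ε * p k)
    have hset : {t : ℝ | t ∈ Set.Ico 0 Real.pi ∧
        (∑ j ∈ Ea, aC j * Real.cos (j * t)) + (∑ j ∈ Eb, bC j * Real.sin (j * t)) = ε * p k}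
        = {t : ℝ | t ∈ Set.Ico 0 Real.pi ∧ μ t = ε * p k} := by
      ext t; rw [Set.mem_setOf_eq, Set.mem_setOf_eq, ← hμ t]
    rw [hset] at h
    exact h
  set Z : Set ℝ := ⋃ k : Fin (n+1), {t : ℝ | t ∈ Set.Ico 0 Real.pi ∧ μ t = ε * p k} with hZdef
  have hZfin : Z.Finite := Set.finite_iUnion (fun k => (hZk k).1)
  have hzmem : ∀ z ∈ Z, 0 ≤ z ∧ z < Real.pi := by
    intro z hz
    obtain ⟨k, hk⟩ := Set.mem_iUnion.mp hz
    exact ⟨hk.1.1, hk.1.2⟩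
  have hZcard : Z.ncard ≤ (n+1)*(2*d) := by
    classical
    have hsub : hZfin.toFinset ⊆ Finset.univ.biUnion (fun k : Fin (n+1) => (hZk k).1.toFinset) := by
      intro z hz
      rw [Set.Finite.mem_toFinset] at hz
      obtain ⟨k, hk⟩ := Set.mem_iUnion.mp hz
      exact Finset.mem_biUnion.mpr ⟨k, Finset.mem_univ _, (Set.Finite.mem_toFinset _).mpr hk⟩
    calc Z.ncard = hZfin.toFinset.card := by
          rw [Set.ncard_eq_toFinset_card Z hZfin]
      _ ≤ (Finset.univ.biUnion (fun k : Fin (n+1) => (hZk k).1.toFinset)).card :=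
          Finset.card_le_card hsub
      _ ≤ ∑ k : Fin (n+1), ((hZk k).1.toFinset).card := Finset.card_biUnion_le
      _ ≤ ∑ _k : Fin (n+1), 2*d := by
          refine Finset.sum_le_sum (fun k _ => ?_)
          rw [← Set.ncard_eq_toFinset_card _ (hZk k).1]
          exact (hZk k).2
      _ = (n+1) * (2*d) := by simp [Finset.sum_const, Finset.card_univ]
  -- sorted crossing points in (0, π)
  set Z' : Set ℝ := Z \ {0} with hZ'def
  have hZ'fin : Z'.Finite := hZfin.subset Set.diff_subset
  set l : List ℝ := hZ'fin.toFinset.sort (· ≤ ·) with hldef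
  set M : ℕ := l.length with hMdef
  have hMcard : M = Z'.ncard := by
    rw [hMdef, hldef, Finset.length_sort, Set.ncard_eq_toFinset_card _ hZ'fin]
  have hMle : M ≤ (n+1)*(2*d) := by
    rw [hMcard]
    exact le_trans (Set.ncard_le_ncard Set.diff_subset hZfin) hZcard
  have hlsorted : l.SortedLT := Finset.sortedLT_sort _
  have hlmem : ∀ i : Fin l.length, l.get i ∈ Z' := by
    intro i
    have h1 : l.get i ∈ l := by
      have := List.get_mem l i
      simpa using this
    exact (Set.Finite.mem_toFinset _).mp ((Finset.mem_sort _).mp h1)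
  have hlpos : ∀ i : Fin l.length, 0 < l.get i := by
    intro i
    have h := hlmem i
    have h2 := (hzmem _ h.1).1
    exact lt_of_le_of_ne h2 (fun hc => h.2 hc.symm)
  have hlltpi : ∀ i : Fin l.length, l.get i < Real.pi := fun i => (hzmem _ (hlmem i).1).2
  set φ : ℕ → ℝ := fun m => if m = 0 then 0 else
    if h : m - 1 < l.length then l.get ⟨m-1, h⟩ else Real.pi with hφdef
  have hφ0 : φ 0 = 0 := by simp [hφdef]
  have hφlast : φ (M + 1) = Real.pi := by
    simp only [hφdef, Nat.succ_ne_zero, if_false, Nat.add_sub_cancel]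
    rw [dif_neg (by omega)]
  have hφlt : ∀ m ≤ M, φ m < φ (m + 1) := by
    intro m hm
    rcases Nat.eq_zero_or_pos m with h0 | h0
    · subst h0
      rw [hφ0]
      simp only [hφdef, Nat.one_ne_zero, if_false]
      rcases Nat.lt_or_ge 0 l.length with hl | hl
      · rw [dif_pos (by omega)]
        exact hlpos _
      · rw [dif_neg (by omega)]
        exact Real.pi_pos
    · have hm1 : m - 1 < l.length := by omega
      have he1 : φ m = l.get ⟨m-1, hm1⟩ := by
        simp only [hφdef]
        rw [if_neg (by omega), dif_pos hm1]
      rcases Nat.lt_or_ge m l.length with hl | hl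
      · have he2 : φ (m+1) = l.get ⟨m, hl⟩ := by
          simp only [hφdef]
          rw [if_neg (by omega), dif_pos (show m+1-1 < l.length by omega)]
          rfl
        rw [he1, he2]
        exact hlsorted.strictMono_get (by simp [Fin.lt_def]; omega)
      · have he2 : φ (m+1) = Real.pi := by
          simp only [hφdef]
          rw [if_neg (by omega), dif_neg (by omega)]
        rw [he1, he2]
        exact hlltpi _
  have hφmono : ∀ a b, a ≤ b → b ≤ M + 1 → φ a ≤ φ b := by
    intro a b hab hbM
    induction b with
    | zero => simp at hab; simp [hab]
    | succ b ih =>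
      rcases Nat.eq_or_lt_of_le hab with h | h
      · rw [h]
      · exact le_trans (ih (by omega) (by omega)) (le_of_lt (hφlt b (by omega)))
  have hφstrict : ∀ a b, a < b → b ≤ M + 1 → φ a < φ b := by
    intro a b hab hbM
    calc φ a ≤ φ (b-1) := hφmono a (b-1) (by omega) (by omega)
      _ < φ (b-1+1) := hφlt (b-1) (by omega)
      _ = φ b := by congr 1; omega
  have hZ'φ : ∀ z ∈ Z', ∃ i < M, z = φ (i + 1) := by
    intro z hz
    have h1 : z ∈ l := by
      rw [hldef, Finset.mem_sort]
      exact (Set.Finite.mem_toFinset _).mpr hz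
    obtain ⟨i, hi⟩ := List.mem_iff_get.mp h1
    refine ⟨i, i.isLt, ?_⟩
    simp only [hφdef]
    rw [if_neg (by omega), dif_pos (show i+1-1 < l.length by omega)]
    exact hi.symm
  -- index function and step function
  set idx : ℝ → ℕ := fun t => ∑ m ∈ Finset.range (M+1), if φ (m+1) ≤ t then 1 else 0 with hidxdef
  set sv : ℕ → Fin (n + 2) := fun m =>
    ⟨selIdx p ε (μ ((φ m + φ (m+1))/2)), Nat.lt_succ_of_le (selIdx_le _)⟩ with hsvdef
  set v : ℝ → ℝ := fun t => nodes (sv (idx t)) with hvdef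
  have hidx_eq : ∀ m ≤ M, ∀ t, φ m ≤ t → t < φ (m + 1) → idx t = m := by
    intro m hm t ht1 ht2
    have hterm : ∀ m' ∈ Finset.range (M+1),
        (if φ (m'+1) ≤ t then 1 else 0) = if m' < m then 1 else 0 := by
      intro m' hm'
      rw [Finset.mem_range] at hm'
      rcases Nat.lt_or_ge m' m with h | h
      · rw [if_pos h, if_pos (le_trans (hφmono (m'+1) m (by omega) (by omega)) ht1)]
      · rw [if_neg (not_le.mpr (lt_of_lt_of_le ht2
          (hφmono (m+1) (m'+1) (by omega) (by omega)))), if_neg (by omega : ¬ m' < m)]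
    rw [hidxdef]
    simp only
    rw [Finset.sum_congr rfl hterm, ← Finset.sum_filter]
    have : Finset.filter (· < m) (Finset.range (M+1)) = Finset.range m := by
      ext x; simp [Finset.mem_filter, Finset.mem_range]; omega
    rw [this]
    simp
  have hidx_exists : ∀ t, 0 ≤ t → t < Real.pi → ∃ m ≤ M, φ m ≤ t ∧ t < φ (m + 1) := by
    intro t ht0 htpi
    set P : ℕ → Prop := fun m => φ m ≤ t with hP
    have hP0 : P 0 := by rw [hP]; simpa [hφ0] using ht0
    set m : ℕ := Nat.findGreatest P M with hm
    have hmle : m ≤ M := Nat.findGreatest_le M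
    have hmspec : P m := Nat.findGreatest_spec (Nat.zero_le M) hP0
    refine ⟨m, hmle, hmspec, ?_⟩
    rcases Nat.eq_or_lt_of_le hmle with he | he
    · rw [he, hφlast]; exact htpi
    · by_contra hcon
      push_neg at hcon
      have : m + 1 ≤ m := Nat.le_findGreatest (by omega) hcon
      omega
  have hvstep : ∀ m ≤ M, ∀ t ∈ Set.Ico (φ m) (φ (m+1)), v t = nodes (sv m) := by
    intro m hm t ht
    rw [hvdef]
    simp only
    rw [hidx_eq m hm t ht.1 ht.2]
  have hv_eq_u : ∀ t, t ∈ Set.Ico (0:ℝ) Real.pi → t ∉ S → t ∉ Z → u t = v t := by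
    intro t htI htS htZ
    obtain ⟨m, hm, ht1, ht2⟩ := hidx_exists t htI.1 htI.2
    have hyne : ∀ k : Fin (n+1), μ t ≠ ε * p k := by
      intro k hk
      exact htZ (Set.mem_iUnion.mpr ⟨k, ⟨htI, hk⟩⟩)
    have hmin' : ∀ w ∈ Set.Icc (-1:ℝ) 1,
        ε * Lfun (u t) - μ t * u t ≤ ε * Lfun w - μ t * w := hSmin t ⟨htI, htS⟩
    have huval := argmin_eq hnodes hn0 hnlast hpmono Lfun hLaff hε (μ t) hyne (u t) (hur t) hmin'
    set c : ℝ := (φ m + φ (m+1))/2 with hc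
    have hφmlt : φ m < φ (m+1) := hφlt m hm
    have hcmem : φ m < c ∧ c < φ (m+1) := by constructor <;> (rw [hc]; linarith)
    have hnocross : ∀ r ∈ Set.uIcc t c, ∀ k : Fin (n+1), μ r ≠ ε * p k := by
      intro r hr k hk
      rw [Set.mem_uIcc] at hr
      have hrlb : φ m ≤ r := by
        rcases hr with ⟨h1, _⟩ | ⟨h1, _⟩
        · exact le_trans ht1 h1
        · exact le_trans (le_of_lt hcmem.1) h1
      have hrub : r < φ (m+1) := by
        rcases hr with ⟨_, h2⟩ | ⟨_, h2⟩
        · exact lt_of_le_of_lt h2 hcmem.2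
        · exact lt_of_le_of_lt h2 ht2
      have hrI : r ∈ Set.Ico (0:ℝ) Real.pi := by
        constructor
        · have := hφmono 0 m (Nat.zero_le m) (by omega)
          rw [hφ0] at this
          linarith
        · have := hφmono (m+1) (M+1) (by omega) (by omega)
          rw [hφlast] at this
          linarith
      have hrZ : r ∈ Z := Set.mem_iUnion.mpr ⟨k, ⟨hrI, hk⟩⟩
      by_cases hrt : r = t
      · exact hyne k (hrt ▸ hk)
      · have hrgt : φ m < r := by
          rcases eq_or_lt_of_le hrlb with he | he
          · exfalso
            rcases hr with ⟨h1, _⟩ | ⟨h1, _⟩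
            · exact hrt (le_antisymm (by linarith) h1)
            · linarith [hcmem.1]
          · exact he
        have hrZ' : r ∈ Z' := ⟨hrZ, by
          intro h0
          rw [Set.mem_singleton_iff] at h0
          have := hφmono 0 m (Nat.zero_le m) (by omega)
          rw [hφ0] at this
          linarith⟩
        obtain ⟨i, hiM, hieq⟩ := hZ'φ r hrZ'
        have h1 : m < i + 1 := by
          by_contra hc1
          push_neg at hc1
          have := hφmono (i+1) m hc1 (by omega)
          rw [← hieq] at this
          linarith
        have h2 : i + 1 < m + 1 := by
          by_contra hc2
          push_neg at hc2
          have := hφmono (m+1) (i+1) hc2 (by omega)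
          rw [← hieq] at this
          linarith
        omega
    have hsel : selIdx p ε (μ t) = selIdx p ε (μ c) := selIdx_const μ hcont t c hnocross
    have hvt : v t = nodes (sv m) := hvstep m hm t ⟨ht1, ht2⟩
    rw [hvt, huval, hsvdef]
    simp only
    congr 1
    exact Fin.ext hsel
  -- a.e. equality
  have hae : ∀ᵐ t ∂(volume.restrict (Set.Ico 0 Real.pi)), u t = v t := by
    have h1 : ∀ᵐ t : ℝ ∂volume, t ∉ S ∪ Z := by
      rw [ae_iff]
      refine measure_mono_null (fun t ht => ?_) ((hSfin.union hZfin).measure_zero volume)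
      exact not_not.mp ht
    filter_upwards [ae_restrict_of_ae h1, ae_restrict_mem measurableSet_Ico] with t ht htmem
    exact hv_eq_u t htmem (fun h => ht (Or.inl h)) (fun h => ht (Or.inr h))
  -- measurability
  have hidx_meas : Measurable idx := by
    rw [hidxdef]
    refine Finset.measurable_sum _ (fun m _ => ?_)
    exact Measurable.ite (measurableSet_Ici (a := φ (m+1))) measurable_const measurable_const
  have hv_meas : Measurable v := by
    rw [hvdef]
    exact (measurable_from_top (f := fun m : ℕ => nodes (sv m))).comp hidx_meas
  have hvle : ∀ t, |v t| ≤ 1 := by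
    intro t
    have := nodes_mem_Icc hnodes hn0 hnlast (sv (idx t))
    rw [hvdef]
    exact abs_le.mpr this
  -- integral bound
  have hint : IntegrableOn (fun t => |v t|) (Set.Ico 0 Real.pi) := by
    refine Integrable.mono' (integrable_const 1) hv_meas.abs.aestronglyMeasurable ?_
    filter_upwards with t
    rw [Real.norm_eq_abs, abs_abs]
    exact hvle t
  have hintle : (∫ t in Set.Ico (0:ℝ) Real.pi, |v t|) ≤ Real.pi := by
    have h1 : (∫ t in Set.Ico (0:ℝ) Real.pi, |v t|) ≤ ∫ _t in Set.Ico (0:ℝ) Real.pi, (1:ℝ) :=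
      setIntegral_mono_on hint (integrable_const 1) measurableSet_Ico (fun t _ => hvle t)
    have h2 : (∫ _t in Set.Ico (0:ℝ) Real.pi, (1:ℝ)) = Real.pi := by
      rw [setIntegral_const, Real.volume_real_Ico, smul_eq_mul, mul_one, sub_zero,
        max_eq_left Real.pi_pos.le]
    linarith
  -- variation bound
  have hidx_mono : ∀ s t : ℝ, s ≤ t → idx s ≤ idx t := by
    intro s t hst
    rw [hidxdef]
    refine Finset.sum_le_sum (fun m _ => ?_)
    by_cases h : φ (m+1) ≤ s
    · rw [if_pos h, if_pos (le_trans h hst)]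
    · rw [if_neg h]
      split <;> omega
  have hidx_leM : ∀ t : ℝ, t < Real.pi → idx t ≤ M := by
    intro t ht
    rw [hidxdef]
    simp only
    rw [Finset.sum_range_succ, if_neg (by rw [hφlast]; linarith)]
    rw [add_zero]
    calc (∑ m ∈ Finset.range M, if φ (m+1) ≤ t then 1 else 0)
        ≤ ∑ _m ∈ Finset.range M, 1 := Finset.sum_le_sum (fun m _ => by split <;> omega)
      _ = M := by simp
  have hv_idx : ∀ a b : ℝ, idx a = idx b → v a = v b := by
    intro a b h
    rw [hvdef]
    simp only [h]
  have hedist2 : ∀ a b : ℝ, edist (v a) (v b) ≤ 2 := by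
    intro a b
    rw [edist_dist, Real.dist_eq]
    have h3 : |v a - v b| ≤ 2 := by
      have h1 := hvle a; have h2 := hvle b
      have h4 := abs_sub (v a) (v b)
      linarith
    calc ENNReal.ofReal (|v a - v b|) ≤ ENNReal.ofReal 2 := ENNReal.ofReal_le_ofReal h3
      _ = 2 := by norm_num
  have hkey : ∀ a b : ℝ, a ≤ b → edist (v b) (v a) ≤ 2 * ((idx b - idx a : ℕ) : ℝ≥0∞) := by
    intro a b hab
    by_cases h : idx a = idx b
    · rw [hv_idx a b h]
      simp [edist_self]
    · have h1 : 1 ≤ idx b - idx a := by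
        have := hidx_mono a b hab
        omega
      calc edist (v b) (v a) ≤ 2 := hedist2 b a
        _ = 2 * 1 := (mul_one _).symm
        _ ≤ 2 * ((idx b - idx a : ℕ) : ℝ≥0∞) := by
            refine mul_le_mul_right ?_ 2
            exact_mod_cast Nat.one_le_cast.mpr h1
  have hvar : eVariationOn v (Set.Ico 0 Real.pi) ≤ 2 * ((n+1)*(2*d) : ℕ) := by
    refine iSup_le ?_
    rintro ⟨N, ⟨t, htmono, htmem⟩⟩
    simp only
    have main : ∀ N' : ℕ, ∑ i ∈ Finset.range N', edist (v (t (i + 1))) (v (t i))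
        ≤ 2 * ((idx (t N') - idx (t 0) : ℕ) : ℝ≥0∞) := by
      intro N'
      induction N' with
      | zero => simp
      | succ N' ih =>
        rw [Finset.sum_range_succ]
        have h1 := hkey (t N') (t (N'+1)) (htmono (Nat.le_succ N'))
        have h2 : ((idx (t N') - idx (t 0) : ℕ) : ℝ≥0∞) + ((idx (t (N'+1)) - idx (t N') : ℕ) : ℝ≥0∞)
            = ((idx (t (N'+1)) - idx (t 0) : ℕ) : ℝ≥0∞) := by
          rw [← Nat.cast_add]
          congr 1
          have ha := hidx_mono (t 0) (t N') (htmono (Nat.zero_le N'))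
          have hb := hidx_mono (t N') (t (N'+1)) (htmono (Nat.le_succ N'))
          omega
        calc (∑ i ∈ Finset.range N', edist (v (t (i + 1))) (v (t i))) + edist (v (t (N'+1))) (v (t N'))
            ≤ 2 * ((idx (t N') - idx (t 0) : ℕ) : ℝ≥0∞)
              + 2 * ((idx (t (N'+1)) - idx (t N') : ℕ) : ℝ≥0∞) := add_le_add ih h1
          _ = 2 * ((idx (t (N'+1)) - idx (t 0) : ℕ) : ℝ≥0∞) := by rw [← mul_add, h2]
    refine le_trans (main N) ?_
    refine mul_le_mul_right ?_ 2
    have h1 : idx (t N) ≤ M := hidx_leM (t N) (htmem N).2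
    have h2 : idx (t N) - idx (t 0) ≤ (n+1)*(2*d) := by omega
    exact_mod_cast Nat.cast_le.mpr h2
  -- assemble
  refine ⟨v, hae, ⟨M, φ, sv, hMle, hφ0, hφlast, hφlt, hvstep⟩, hintle, hvar⟩
end
end
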